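/- Let F be a field, char(F) ≠ 2,3, and let f = f₁f₂ where f₁, f₂ are binary quadratic forms over F each splitting over the quadratic extension as conjugate pairs (f ∈ F₄', i.e. f has 4 distinct roots, none in P¹(F), all in P¹ of the quadratic extension), with set of cross-ratios {λ, λ⁻¹} for λ ∈ {-1,2,1/2}. Then I(f) is a square in F if and only if 3 is a square in F. -/
import Mathlib


noncomputable section
open MvPolynomial

/-- The binary quartic form `z₀Y⁴ - 4z₁Y³X + 6z₂Y²X² - 4z₃YX³ + z₄X⁴`,
where `X 0` plays the role of `X` and `X 1` the role of `Y`. -/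
def quartic {F : Type*} [Field F] (z : Fin 5 → F) : MvPolynomial (Fin 2) F :=
  C (z 0) * X 1 ^ 4 - 4 * C (z 1) * X 1 ^ 3 * X 0 + 6 * C (z 2) * X 1 ^ 2 * X 0 ^ 2
    - 4 * C (z 3) * X 1 * X 0 ^ 3 + C (z 4) * X 0 ^ 4

/-- The apolar invariant `I(f) = (z₀z₄ - 4z₁z₃ + 3z₂²)/3`. -/
def apolarI {F : Type*} [Field F] (z : Fin 5 → F) : F :=
  (z 0 * z 4 - 4 * z 1 * z 3 + 3 * z 2 ^ 2) / 3

/-- let `f = f₁f₂` be a quartic form over `F` (char ≠ 2,3) whose two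
quadratic factors `f₁, f₂` are defined over `F` and split over a quadratic extension `K`
(with conjugation `σ`, whose fixed field is `F`) into Galois-conjugate pairs of roots,
none rational, all distinct, and whose cross-ratio `λ` (for the restricted ordering
`(r₁, σr₁, r₂, σr₂)`) lies in `{-1, 2, 1/2}` (i.e. `j(f) = 1728`).
Then `I(f)` is a square in `F` iff `3` is a square in `F`. -/
theorem stmt16 {F K : Type*} [Field F] [Field K] [Algebra F K]
    (h2 : (2 : F) ≠ 0) (h3 : (3 : F) ≠ 0)
    (σ : K ≃ₐ[F] K)
    (hfix : ∀ x : K, σ x = x ↔ x ∈ Set.range (algebraMap F K))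
    (α : Fin 4 → K)
    (hconj1 : α 1 = σ (α 0)) (hconj2 : α 3 = σ (α 2))
    (hirr : ∀ i, α i ∉ Set.range (algebraMap F K))
    (hdist : ∀ i j, i ≠ j → α i ≠ α j)
    (hf₁ : α 0 + α 1 ∈ Set.range (algebraMap F K) ∧
      α 0 * α 1 ∈ Set.range (algebraMap F K))
    (hf₂ : α 2 + α 3 ∈ Set.range (algebraMap F K) ∧
      α 2 * α 3 ∈ Set.range (algebraMap F K))
    (z : Fin 5 → F) (c : F) (hc : c ≠ 0)
    (hf : MvPolynomial.map (algebraMap F K) (quartic z)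
      = C (algebraMap F K c) * ∏ i, (X 1 - C (α i) * X 0))
    (lam : K)
    (hlam : lam = ((α 2 - α 0) * (α 3 - α 1)) / ((α 2 - α 1) * (α 3 - α 0)))
    (h1728 : lam = -1 ∨ lam = 2 ∨ lam = 1 / 2) :
    (∃ x : F, x ^ 2 = apolarI z) ↔ (∃ y : F, y ^ 2 = 3) := by
  have hinj : Function.Injective (algebraMap F K) := (algebraMap F K).injective
  have h2K : (2 : K) ≠ 0 := by
    intro h; apply h2; apply hinj; rw [map_ofNat, map_zero, h]
  have h3K : (3 : K) ≠ 0 := by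
    intro h; apply h3; apply hinj; rw [map_ofNat, map_zero, h]
  have h12K : (12 : K) ≠ 0 := by
    have : (12 : K) = 2 * 2 * 3 := by norm_num
    rw [this]
    exact mul_ne_zero (mul_ne_zero h2K h2K) h3K
  have h24K : (24 : K) ≠ 0 := by
    have : (24 : K) = 2 * 12 := by norm_num
    rw [this]
    exact mul_ne_zero h2K h12K
  -- evaluate the factorization at X0 = 1, X1 = t
  have key : ∀ t : K,
      algebraMap F K (z 0) * t ^ 4 - 4 * algebraMap F K (z 1) * t ^ 3
        + 6 * algebraMap F K (z 2) * t ^ 2 - 4 * algebraMap F K (z 3) * t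
        + algebraMap F K (z 4)
      = algebraMap F K c * ((t - α 0) * ((t - α 1) * ((t - α 2) * (t - α 3)))) := by
    intro t
    have h := congrArg (eval ![(1 : K), t]) hf
    simp [quartic, Fin.prod_univ_four, eval_map, eval₂, mul_assoc] at h
    linear_combination h
  have k0 := key 0
  have k1 := key 1
  have km1 := key (-1)
  have k2 := key 2
  have km2 := key (-2)
  -- recover the coefficients
  have hw0 : algebraMap F K (z 0) = algebraMap F K c :=
    mul_left_cancel₀ h24K (show (24:K) * _ = (24:K) * _ by
      linear_combination 6*k0 - 4*k1 - 4*km1 + k2 + km2)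
  have hw1 : 4 * algebraMap F K (z 1) = algebraMap F K c * (α 0 + α 1 + α 2 + α 3) :=
    mul_left_cancel₀ h12K (show (12:K) * _ = (12:K) * _ by
      linear_combination 2*k1 - 2*km1 - k2 + km2)
  have hw2 : 6 * algebraMap F K (z 2) = algebraMap F K c *
      (α 0*α 1 + α 0*α 2 + α 0*α 3 + α 1*α 2 + α 1*α 3 + α 2*α 3) :=
    mul_left_cancel₀ h24K (show (24:K) * _ = (24:K) * _ by
      linear_combination -30*k0 + 16*k1 + 16*km1 - k2 - km2)
  have hw3 : 4 * algebraMap F K (z 3) = algebraMap F K c *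
      (α 0*α 1*α 2 + α 0*α 1*α 3 + α 0*α 2*α 3 + α 1*α 2*α 3) :=
    mul_left_cancel₀ h12K (show (12:K) * _ = (12:K) * _ by
      linear_combination -8*k1 + 8*km1 + k2 - km2)
  have hw4 : algebraMap F K (z 4) = algebraMap F K c * (α 0*α 1*α 2*α 3) := by
    linear_combination k0
  -- the quadratic invariant identity
  have hQ : 12 * (algebraMap F K (z 0) * algebraMap F K (z 4)
        - 4 * algebraMap F K (z 1) * algebraMap F K (z 3)
        + 3 * algebraMap F K (z 2) ^ 2)
      = (algebraMap F K c) ^ 2 *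
        (((α 2 - α 0) * (α 3 - α 1)) ^ 2
          - ((α 2 - α 0) * (α 3 - α 1)) * ((α 2 - α 1) * (α 3 - α 0))
          + ((α 2 - α 1) * (α 3 - α 0)) ^ 2) := by
    linear_combination (12 * algebraMap F K (z 4)) * hw0
      + 12 * algebraMap F K c * hw4
      - 3 * (4 * algebraMap F K (z 3)) * hw1
      - 3 * algebraMap F K c * (α 0 + α 1 + α 2 + α 3) * hw3
      + (6 * algebraMap F K (z 2)
          + algebraMap F K c * (α 0*α 1 + α 0*α 2 + α 0*α 3 + α 1*α 2 + α 1*α 3 + α 2*α 3)) * hw2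
  -- sigma facts
  have hs0 : σ (σ (α 0)) = α 0 := by
    have h := (hfix _).mpr hf₁.1
    rw [hconj1, map_add] at h
    linear_combination h
  have hs2 : σ (σ (α 2)) = α 2 := by
    have h := (hfix _).mpr hf₂.1
    rw [hconj2, map_add] at h
    linear_combination h
  have hσ0 : σ (α 0) = α 1 := hconj1.symm
  have hσ1 : σ (α 1) = α 0 := by rw [hconj1, hs0]
  have hσ2 : σ (α 2) = α 3 := hconj2.symm
  have hσ3 : σ (α 3) = α 2 := by rw [hconj2, hs2]
  have hAσ : σ ((α 2 - α 0) * (α 3 - α 1)) = (α 2 - α 0) * (α 3 - α 1) := by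
    rw [map_mul, map_sub, map_sub, hσ0, hσ1, hσ2, hσ3]; ring
  have hBσ : σ ((α 2 - α 1) * (α 3 - α 0)) = (α 2 - α 1) * (α 3 - α 0) := by
    rw [map_mul, map_sub, map_sub, hσ0, hσ1, hσ2, hσ3]; ring
  have hAne : (α 2 - α 0) * (α 3 - α 1) ≠ 0 :=
    mul_ne_zero (sub_ne_zero.mpr (hdist 2 0 (by decide)))
      (sub_ne_zero.mpr (hdist 3 1 (by decide)))
  have hBne : (α 2 - α 1) * (α 3 - α 0) ≠ 0 :=
    mul_ne_zero (sub_ne_zero.mpr (hdist 2 1 (by decide)))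
      (sub_ne_zero.mpr (hdist 3 0 (by decide)))
  -- in each case, the bracket is 3 d² for a σ-fixed nonzero d
  obtain ⟨d, hdσ, hdne, hdE⟩ : ∃ d : K, σ d = d ∧ d ≠ 0 ∧
      ((α 2 - α 0) * (α 3 - α 1)) ^ 2
        - ((α 2 - α 0) * (α 3 - α 1)) * ((α 2 - α 1) * (α 3 - α 0))
        + ((α 2 - α 1) * (α 3 - α 0)) ^ 2 = 3 * d ^ 2 := by
    rw [hlam] at h1728
    rcases h1728 with h | h | h
    · refine ⟨(α 2 - α 1) * (α 3 - α 0), hBσ, hBne, ?_⟩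
      rw [div_eq_iff hBne] at h
      rw [h]; ring
    · refine ⟨(α 2 - α 1) * (α 3 - α 0), hBσ, hBne, ?_⟩
      rw [div_eq_iff hBne] at h
      rw [h]; ring
    · refine ⟨(α 2 - α 0) * (α 3 - α 1), hAσ, hAne, ?_⟩
      rw [div_eq_div_iff hBne h2K] at h
      linear_combination (-((α 2 - α 1) * (α 3 - α 0)) - (α 2 - α 0) * (α 3 - α 1)) * h
  obtain ⟨b, hb⟩ := (hfix d).mp hdσ
  have hbne : b ≠ 0 := by
    intro h0; apply hdne; rw [← hb, h0, map_zero]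
  have hmain : 4 * (z 0 * z 4 - 4 * z 1 * z 3 + 3 * z 2 ^ 2) = (c * b) ^ 2 := by
    apply hinj
    simp only [map_mul, map_sub, map_add, map_pow, map_ofNat]
    rw [hb]
    apply mul_left_cancel₀ h12K
    linear_combination 4 * hQ + 4 * (algebraMap F K c) ^ 2 * hdE
  have hI12 : 12 * apolarI z = (c * b) ^ 2 := by
    rw [apolarI, ← hmain]
    field_simp
    ring
  have hcb : c * b ≠ 0 := mul_ne_zero hc hbne
  have h6 : (6 : F) ≠ 0 := by
    have : (6 : F) = 2 * 3 := by norm_num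
    rw [this]; exact mul_ne_zero h2 h3
  constructor
  · rintro ⟨x, hx⟩
    have hxne : x ≠ 0 := by
      intro h0
      apply hcb
      rw [h0] at hx
      have h4 : (c * b) ^ 2 = 0 := by rw [← hI12, ← hx]; ring
      exact pow_eq_zero_iff two_ne_zero |>.mp h4
    refine ⟨c * b / (2 * x), ?_⟩
    rw [div_pow, div_eq_iff (pow_ne_zero _ (mul_ne_zero h2 hxne))]
    linear_combination -12 * hx - hI12
  · rintro ⟨y, hy⟩
    refine ⟨y * (c * b) / 6, ?_⟩
    rw [div_pow, div_eq_iff (pow_ne_zero _ h6)]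
    linear_combination (c * b) ^ 2 * hy - 3 * hI12
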